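/- Let G be a graph with at least 5 vertices having an edge e = vw such that both v and w have degree exactly 2. If the contraction G/e is prime, then G is prime. -/

import Mathlib

variable {V : Type*}

/-- A split of a simple graph. -/
def IsSplit (G : SimpleGraph V) (A B : Set V) : Prop :=
  A ∪ B = Set.univ ∧ Disjoint A B ∧ 2 ≤ A.ncard ∧ 2 ≤ B.ncard ∧
    ∃ A' B', A' ⊆ A ∧ B' ⊆ B ∧ ∀ x ∈ A, ∀ y ∈ B, (G.Adj x y ↔ (x ∈ A' ∧ y ∈ B'))

/-- A graph is prime if it has no split. -/
def IsPrime (G : SimpleGraph V) : Prop := ¬ ∃ A B : Set V, IsSplit G A B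

/-- Local complementation at a vertex. -/
def localComp (G : SimpleGraph V) (v : V) : SimpleGraph V where
  Adj x y := x ≠ y ∧ Xor' (G.Adj x y) (G.Adj v x ∧ G.Adj v y)
  symm := by
    constructor
    intro x y h
    refine ⟨h.1.symm, ?_⟩
    rw [SimpleGraph.adj_comm, and_comm]
    exact h.2
  loopless := by constructor; intro x h; exact h.1 rfl

/-- Pivoting an edge: G ∧ vw = G*v*w*v. -/
def pivot (G : SimpleGraph V) (v w : V) : SimpleGraph V :=
  localComp (localComp (localComp G v) w) v

/-- Vertex deletion. -/
def deleteVert (G : SimpleGraph V) (v : V) : SimpleGraph {x : V // x ≠ v} :=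
  G.induce {x | x ≠ v}

/-- Two vertices are twins if every other vertex is adjacent to one iff to the other. -/
def Twins (G : SimpleGraph V) (u w : V) : Prop :=
  ∀ x, x ≠ u → x ≠ w → (G.Adj x u ↔ G.Adj x w)

lemma isSplit_symm {G : SimpleGraph V} {A B : Set V} (h : IsSplit G A B) : IsSplit G B A := by
  obtain ⟨hU, hD, hA2, hB2, A', B', hA', hB', hAdj⟩ := h
  refine ⟨by rw [Set.union_comm]; exact hU, hD.symm, hB2, hA2, B', A', hB', hA', ?_⟩
  intro x hx y hy
  rw [SimpleGraph.adj_comm, hAdj y hy x hx, and_comm]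

/-- generic pair-split lemma -/
lemma not_prime_of_pair {W : Type*} [Finite W] (K : SimpleGraph W)
    (hcard : 4 ≤ Nat.card W) (p q : W) (hpq : p ≠ q) (A' B' : Set W)
    (hA' : A' ⊆ {p, q}) (hB' : ∀ y ∈ B', y ≠ p ∧ y ≠ q)
    (h : ∀ x ∈ ({p, q} : Set W), ∀ y, y ≠ p → y ≠ q → (K.Adj x y ↔ x ∈ A' ∧ y ∈ B')) :
    ¬ IsPrime K := by
  intro hprime
  apply hprime
  refine ⟨{p, q}, {p, q}ᶜ, ?_, ?_, ?_, ?_, A', B', hA', ?_, ?_⟩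
  · simp
  · exact disjoint_compl_right
  · rw [Set.ncard_pair hpq]
  · have h1 : ({p, q} : Set W).ncard + ({p, q}ᶜ : Set W).ncard = Nat.card W := by
      rw [Set.ncard_add_ncard_compl]
    rw [Set.ncard_pair hpq] at h1
    omega
  · intro y hy
    simp only [Set.mem_compl_iff, Set.mem_insert_iff, Set.mem_singleton_iff]
    rcases hB' y hy with ⟨h1, h2⟩
    tauto
  · intro x hx y hy
    simp only [Set.mem_compl_iff, Set.mem_insert_iff, Set.mem_singleton_iff] at hy
    push_neg at hy
    exact h x hx y hy.1 hy.2

lemma ncard_subtype_set {v : V} [Finite V] (A : Set V) :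
    ({x : {z : V // z ≠ v} | x.1 ∈ A}).ncard = (A \ {v}).ncard := by
  have hinj : Function.Injective (Subtype.val : {z : V // z ≠ v} → V) := Subtype.val_injective
  rw [← Set.ncard_image_of_injective _ hinj]
  congr 1
  ext x
  simp only [Set.mem_image, Set.mem_setOf_eq, Set.mem_diff, Set.mem_singleton_iff]
  constructor
  · rintro ⟨y, hy, rfl⟩; exact ⟨hy, y.2⟩
  · rintro ⟨hx, hxv⟩; exact ⟨⟨x, hxv⟩, hx, rfl⟩

lemma subtype_split [Finite V] (v : V) (K : SimpleGraph {x : V // x ≠ v}) (A B : Set V)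
    (hU : A ∪ B = Set.univ) (hD : Disjoint A B) (hvA : v ∈ A)
    (hA3 : 3 ≤ A.ncard) (hB2 : 2 ≤ B.ncard)
    (A'' B'' : Set V) (hA'' : A'' ⊆ A) (hB'' : B'' ⊆ B)
    (hadj : ∀ x, ∀ hx : x ∈ A, ∀ hxv : x ≠ v, ∀ y, ∀ hy : y ∈ B, ∀ hyv : y ≠ v,
      (K.Adj ⟨x, hxv⟩ ⟨y, hyv⟩ ↔ x ∈ A'' ∧ y ∈ B'')) :
    ¬ IsPrime K := by
  intro hprime
  apply hprime
  have hvB : v ∉ B := fun hvB => (hD.ne_of_mem hvA hvB) rfl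
  refine ⟨{x | x.1 ∈ A}, {x | x.1 ∈ B}, ?_, ?_, ?_, ?_, {x | x.1 ∈ A''}, {x | x.1 ∈ B''},
    fun x hx => hA'' hx, fun x hx => hB'' hx, ?_⟩
  · ext x
    simp only [Set.mem_union, Set.mem_setOf_eq, Set.mem_univ, iff_true]
    have : x.1 ∈ A ∪ B := hU ▸ Set.mem_univ _
    exact this
  · rw [Set.disjoint_left]
    intro x hx hx'
    exact (hD.ne_of_mem hx hx') rfl
  · rw [ncard_subtype_set]
    have hA : A.Finite := Set.toFinite A
    rw [Set.ncard_diff_singleton_of_mem hvA]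
    omega
  · rw [ncard_subtype_set]
    have : B \ {v} = B := by
      rw [Set.diff_singleton_eq_self hvB]
    rw [this]; exact hB2
  · rintro ⟨x, hxv⟩ hx ⟨y, hyv⟩ hy
    exact hadj x hx hxv y hy hyv

lemma H_adj (G : SimpleGraph V) (v : V) (x y : {z : V // z ≠ v}) :
    (deleteVert (localComp G v) v).Adj x y ↔
      x.1 ≠ y.1 ∧ Xor' (G.Adj x.1 y.1) (G.Adj v x.1 ∧ G.Adj v y.1) := Iff.rfl

lemma H_adj_of_not_nbrs {G : SimpleGraph V} {v : V} {x y : {z : V // z ≠ v}}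
    (h : ¬ (G.Adj v x.1 ∧ G.Adj v y.1)) :
    (deleteVert (localComp G v) v).Adj x y ↔ G.Adj x.1 y.1 := by
  rw [H_adj]
  constructor
  · rintro ⟨hne, hxor⟩
    rcases hxor with ⟨h1, _⟩ | ⟨h1, _⟩
    · exact h1
    · exact absurd h1 h
  · intro hG
    exact ⟨hG.ne, Or.inl ⟨hG, h⟩⟩

lemma H_adj_of_nbrs {G : SimpleGraph V} {v : V} {x y : {z : V // z ≠ v}}
    (hx : G.Adj v x.1) (hy : G.Adj v y.1) (hne : x.1 ≠ y.1) :
    (deleteVert (localComp G v) v).Adj x y ↔ ¬ G.Adj x.1 y.1 := by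
  rw [H_adj]
  constructor
  · rintro ⟨_, hxor⟩
    rcases hxor with ⟨_, h2⟩ | ⟨_, h2⟩
    · exact absurd ⟨hx, hy⟩ h2
    · exact h2
  · intro hG
    exact ⟨hne, Or.inr ⟨⟨hx, hy⟩, hG⟩⟩

lemma card_subtype_ne [Finite V] (v : V) : Nat.card {x : V // x ≠ v} + 1 = Nat.card V := by
  have h1 : Nat.card {x : V // x ≠ v} = ({v}ᶜ : Set V).ncard := by
    rw [← Nat.card_coe_set_eq]
    exact Nat.card_congr (Equiv.subtypeEquivRight (by simp))
  have h2 := Set.ncard_add_ncard_compl ({v} : Set V)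
  rw [Set.ncard_singleton] at h2
  omega

lemma nbr_pair {G : SimpleGraph V} {v w : V} [Finite V] (h : (G.neighborSet v).ncard = 2)
    (hw : G.Adj v w) : ∃ a, a ≠ w ∧ ∀ x, G.Adj v x ↔ (x = w ∨ x = a) := by
  rw [Set.ncard_eq_two] at h
  obtain ⟨x, y, hxy, hs⟩ := h
  have hwmem : w ∈ G.neighborSet v := hw
  rw [hs] at hwmem
  have hmem : ∀ z, G.Adj v z ↔ (z = x ∨ z = y) := by
    intro z
    have : z ∈ G.neighborSet v ↔ z ∈ ({x, y} : Set V) := by rw [hs]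
    simpa using this
  rcases hwmem with rfl | hwy
  · exact ⟨y, fun h => hxy h.symm, fun z => by rw [hmem z]⟩
  · rw [Set.mem_singleton_iff] at hwy
    subst hwy
    exact ⟨x, fun h => hxy h, fun z => by rw [hmem z]; tauto⟩

lemma three_le_ncard [Finite V] {A : Set V} {x y z : V} (hx : x ∈ A) (hy : y ∈ A) (hz : z ∈ A)
    (hxy : x ≠ y) (hxz : x ≠ z) (hyz : y ≠ z) : 3 ≤ A.ncard := by
  have hsub : ({x, y, z} : Set V) ⊆ A := by
    intro t ht
    rcases ht with rfl | rfl | rfl <;> assumption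
  have h3 : ({x, y, z} : Set V).ncard = 3 := by
    rw [Set.ncard_insert_of_notMem (by simp [hxy, hxz]),
      Set.ncard_insert_of_notMem (by simp [hyz]), Set.ncard_singleton]
  rw [← h3]
  exact Set.ncard_le_ncard hsub (Set.toFinite A)

lemma eq_pair_of_ncard_eq_two [Finite V] {A : Set V} {v : V} (h : A.ncard = 2) (hv : v ∈ A) :
    ∃ u, u ≠ v ∧ A = {v, u} := by
  rw [Set.ncard_eq_two] at h
  obtain ⟨x, y, hxy, rfl⟩ := h
  rcases hv with rfl | hv
  · exact ⟨y, hxy.symm, rfl⟩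
  · rw [Set.mem_singleton_iff] at hv
    subst hv
    exact ⟨x, hxy, by rw [Set.pair_comm]⟩

/-- if G has at least 5 vertices and an edge vw whose ends both have degree
exactly 2, and the contraction G/vw (≅ G*v ∖ v) is prime, then G is prime. -/
theorem prime_of_contraction_prime {V : Type*} [Finite V] (G : SimpleGraph V)
    (hcard : 5 ≤ Nat.card V) (v w : V) (hadj : G.Adj v w)
    (hv : (G.neighborSet v).ncard = 2) (hw : (G.neighborSet w).ncard = 2)
    (hcon : IsPrime (deleteVert (localComp G v) v)) :
    IsPrime G := by
  set H := deleteVert (localComp G v) v with hH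
  obtain ⟨a, haw, hNv⟩ := nbr_pair hv hadj
  obtain ⟨b, hbv, hNw⟩ := nbr_pair hw hadj.symm
  have hGva : G.Adj v a := (hNv a).mpr (Or.inr rfl)
  have hGwb : G.Adj w b := (hNw b).mpr (Or.inr rfl)
  have hav : a ≠ v := hGva.ne'
  have hbw : b ≠ w := hGwb.ne'
  have hwv : w ≠ v := hadj.ne'
  have hcard4 : 4 ≤ Nat.card {x : V // x ≠ v} := by
    have := card_subtype_ne v; omega
  -- helper: a vertex with no H-neighbors gives a split of H
  have hiso_split : ∀ p : {x : V // x ≠ v}, (∀ y, ¬ H.Adj p y) → False := by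
    intro p hiso
    have : Nontrivial {x : V // x ≠ v} := by
      rw [← Finite.one_lt_card_iff_nontrivial]; omega
    obtain ⟨q, hq⟩ := exists_ne p
    refine not_prime_of_pair H hcard4 p q hq.symm {q} {y | y ≠ p ∧ y ≠ q ∧ H.Adj q y}
      (by simp) (fun y hy => ⟨hy.1, hy.2.1⟩) ?_ hcon
    rintro x hx y hyp hyq
    rcases hx with rfl | hxq
    · constructor
      · intro h; exact absurd h (hiso y)
      · rintro ⟨hpq', -⟩; exact absurd (Set.mem_singleton_iff.mp hpq') hq.symm
    · rw [Set.mem_singleton_iff] at hxq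
      subst hxq
      constructor
      · intro h; exact ⟨Set.mem_singleton _, hyp, hyq, h⟩
      · rintro ⟨-, -, -, h⟩; exact h
  by_cases hab : a = b
  · -- w is isolated in H
    subst hab
    exfalso
    apply hiso_split ⟨w, hwv⟩
    intro y hy
    by_cases hya : y.1 = a
    · have hvy : G.Adj v y.1 := by rw [hya]; exact hGva
      have hwy : w ≠ y.1 := by rw [hya]; exact haw.symm
      have hnadj : ¬ G.Adj w y.1 := (H_adj_of_nbrs hadj hvy hwy).mp hy
      apply hnadj; rw [hya]; exact hGwb
    · by_cases hyw : y.1 = w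
      · exact H.irrefl (show H.Adj y y from (Subtype.ext hyw : y = ⟨w, hwv⟩) ▸ hy)
      · have hG : G.Adj w y.1 := (H_adj_of_not_nbrs (by
          rintro ⟨-, hvy⟩
          rcases (hNv y.1).mp hvy with h | h
          · exact hyw h
          · exact hya h)).mp hy
        rcases (hNw y.1).mp hG with h | h
        · exact y.2 h
        · exact hya h
  · -- a ≠ b : H = (G - v) + edge wa
    have hwa_nadj : ¬ G.Adj w a := by
      intro h
      rcases (hNw a).mp h with h' | h'
      · exact hav h'
      · exact hab h'
    have hHwa : H.Adj ⟨w, hwv⟩ ⟨a, hav⟩ :=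
      (H_adj_of_nbrs hadj hGva (Ne.symm haw)).mpr hwa_nadj
    have hHG : ∀ x y : {z : V // z ≠ v}, ¬(x.1 = w ∧ y.1 = a) → ¬(x.1 = a ∧ y.1 = w) →
        (H.Adj x y ↔ G.Adj x.1 y.1) := by
      intro x y h1 h2
      by_cases hxy : x.1 = y.1
      · have hxy' : x = y := Subtype.ext hxy
        subst hxy'
        simp
      · apply H_adj_of_not_nbrs
        rintro ⟨hx, hy⟩
        rcases (hNv _).mp hx with hxw | hxa <;> rcases (hNv _).mp hy with hyw | hya
        · exact hxy (hxw.trans hyw.symm)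
        · exact h1 ⟨hxw, hya⟩
        · exact h2 ⟨hxa, hyw⟩
        · exact hxy (hxa.trans hya.symm)
    rintro ⟨A, B, hsplit⟩
    have main : ∀ A B : Set V, IsSplit G A B → v ∈ A → False := by
      intro A B hsp hvA
      obtain ⟨hU, hD, hA2, hB2, A', B', hA', hB', hAdjAB⟩ := hsp
      have hmem : ∀ x : V, x ∈ A ∨ x ∈ B := by
        intro x
        have : x ∈ A ∪ B := hU ▸ Set.mem_univ x
        exact this
      have hvB : v ∉ B := fun h => (hD.ne_of_mem hvA h) rfl
      have hnotB : ∀ x, x ∈ A → x ∉ B := fun x hx h => (hD.ne_of_mem hx h) rfl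
      have hnotA : ∀ x, x ∈ B → x ∉ A := fun x hx h => (hD.ne_of_mem h hx) rfl
      rcases hmem w with hwA | hwB <;> rcases hmem a with haA | haB
      · -- Case I : w ∈ A, a ∈ A
        have hA3 : 3 ≤ A.ncard := three_le_ncard hvA hwA haA hwv.symm hav.symm haw.symm
        refine subtype_split v H A B hU hD hvA hA3 hB2 (A' \ {v}) B'
          (Set.diff_subset.trans hA') hB' ?_ hcon
        intro x hx hxv y hy hyv
        have hyw : y ≠ w := fun h => hnotA y hy (h ▸ hwA)
        have hya : y ≠ a := fun h => hnotA y hy (h ▸ haA)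
        rw [hHG ⟨x, hxv⟩ ⟨y, hyv⟩ (fun h => hya h.2) (fun h => hyw h.2),
          hAdjAB x hx y hy]
        simp only [Set.mem_diff, Set.mem_singleton_iff]
        tauto
      · -- Case II : w ∈ A, a ∈ B
        have hvA' : v ∈ A' ∧ a ∈ B' := (hAdjAB v hvA a haB).mp hGva
        have hB'a : ∀ y ∈ B', y = a := by
          intro y hy
          have hyB := hB' hy
          have hGvy : G.Adj v y := (hAdjAB v hvA y hyB).mpr ⟨hvA'.1, hy⟩
          rcases (hNv y).mp hGvy with h | h
          · exact absurd (h ▸ hyB) (hnotB w hwA)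
          · exact h
        have hA3 : 3 ≤ A.ncard := by
          by_contra hlt
          have hA2' : A.ncard = 2 := le_antisymm (by omega) hA2
          obtain ⟨u, huv, hAeq⟩ := eq_pair_of_ncard_eq_two hA2' hvA
          have hwu : w = u := by
            have : w ∈ ({v, u} : Set V) := hAeq ▸ hwA
            rcases this with h | h
            · exact absurd h hwv
            · exact h
          have hbB : b ∈ B := by
            rcases hmem b with hbA | hbB
            · rw [hAeq] at hbA
              rcases hbA with h | h
              · exact absurd h hbv
              · exact absurd (hwu ▸ h : b = w) hbw
            · exact hbB
          have : w ∈ A' ∧ b ∈ B' := (hAdjAB w hwA b hbB).mp hGwb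
          exact hab (hB'a b this.2).symm
        refine subtype_split v H A B hU hD hvA hA3 hB2 (insert w (A' \ {v})) {a}
          (Set.insert_subset hwA (Set.diff_subset.trans hA'))
          (Set.singleton_subset_iff.mpr haB) ?_ hcon
        intro x hx hxv y hy hyv
        by_cases hxw : x = w
        · subst hxw
          by_cases hya : y = a
          · subst hya
            constructor
            · intro _; exact ⟨Set.mem_insert _ _, rfl⟩
            · intro _; exact hHwa
          · rw [hHG ⟨x, hxv⟩ ⟨y, hyv⟩ (fun h => hya h.2) (fun h => haw h.1.symm),
              hAdjAB x hx y hy]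
            constructor
            · rintro ⟨-, hyB'⟩; exact absurd (hB'a y hyB') hya
            · rintro ⟨-, hy'⟩; exact absurd (Set.mem_singleton_iff.mp hy') hya
        · have hxa : x ≠ a := fun h => hnotB x hx (h ▸ haB)
          rw [hHG ⟨x, hxv⟩ ⟨y, hyv⟩ (fun h => hxw h.1) (fun h => hxa h.1),
            hAdjAB x hx y hy]
          constructor
          · rintro ⟨hx', hy'⟩
            exact ⟨Set.mem_insert_of_mem _ ⟨hx', by simp [hxv]⟩,
              Set.mem_singleton_iff.mpr (hB'a y hy')⟩
          · rintro ⟨hx', hy'⟩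
            have hya : y = a := Set.mem_singleton_iff.mp hy'
            rcases Set.mem_insert_iff.mp hx' with h | h
            · exact absurd h hxw
            · exact ⟨h.1, hya ▸ hvA'.2⟩
      · -- Case III : w ∈ B, a ∈ A
        have hvw' : v ∈ A' ∧ w ∈ B' := (hAdjAB v hvA w hwB).mp hadj
        have hB'w : ∀ y ∈ B', y = w := by
          intro y hy
          have hyB := hB' hy
          have hGvy : G.Adj v y := (hAdjAB v hvA y hyB).mpr ⟨hvw'.1, hy⟩
          rcases (hNv y).mp hGvy with h | h
          · exact h
          · exact absurd (h ▸ hyB) (hnotB a haA)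
        by_cases hA3 : 3 ≤ A.ncard
        · refine subtype_split v H A B hU hD hvA hA3 hB2 (insert a (A' \ {v})) {w}
            (Set.insert_subset haA (Set.diff_subset.trans hA'))
            (Set.singleton_subset_iff.mpr hwB) ?_ hcon
          intro x hx hxv y hy hyv
          by_cases hxa : x = a
          · subst hxa
            by_cases hyw : y = w
            · subst hyw
              constructor
              · intro _; exact ⟨Set.mem_insert _ _, rfl⟩
              · intro _; exact hHwa.symm
            · rw [hHG ⟨x, hxv⟩ ⟨y, hyv⟩ (fun h => haw h.1) (fun h => hyw h.2),
                hAdjAB x hx y hy]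
              constructor
              · rintro ⟨-, hyB'⟩; exact absurd (hB'w y hyB') hyw
              · rintro ⟨-, hy'⟩; exact absurd (Set.mem_singleton_iff.mp hy') hyw
          · have hxw : x ≠ w := fun h => hnotB x hx (h ▸ hwB)
            rw [hHG ⟨x, hxv⟩ ⟨y, hyv⟩ (fun h => hxw h.1) (fun h => hxa h.1),
              hAdjAB x hx y hy]
            constructor
            · rintro ⟨hx', hy'⟩
              exact ⟨Set.mem_insert_of_mem _ ⟨hx', by simp [hxv]⟩,
                Set.mem_singleton_iff.mpr (hB'w y hy')⟩
            · rintro ⟨hx', hy'⟩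
              have hyw : y = w := Set.mem_singleton_iff.mp hy'
              rcases Set.mem_insert_iff.mp hx' with h | h
              · exact absurd h hxa
              · exact ⟨h.1, hyw ▸ hvw'.2⟩
        · -- A = {v, a}
          have hA2' : A.ncard = 2 := le_antisymm (by omega) hA2
          obtain ⟨u, huv, hAeq⟩ := eq_pair_of_ncard_eq_two hA2' hvA
          have hua : u = a := by
            have : a ∈ ({v, u} : Set V) := hAeq ▸ haA
            rcases this with h | h
            · exact absurd h hav
            · exact h.symm
          rw [hua] at hAeq
          have hbB : b ∈ B := by
            rcases hmem b with hbA | hbB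
            · rw [hAeq] at hbA
              rcases hbA with h | h
              · exact absurd h hbv
              · exact absurd h.symm hab
            · exact hbB
          have haA' : a ∉ A' :=
            fun h => hwa_nadj (((hAdjAB a haA w hwB).mpr ⟨h, hvw'.2⟩).symm)
          have hnadj_a : ∀ y, y ∈ B → ¬ G.Adj a y := by
            intro y hyB hGay
            exact haA' ((hAdjAB a haA y hyB).mp hGay).1
          refine absurd hcon (not_prime_of_pair H hcard4 ⟨a, hav⟩ ⟨w, hwv⟩
            (fun h => haw (congrArg Subtype.val h)) {⟨w, hwv⟩} {⟨b, hbv⟩} (by simp) ?_ ?_)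
          · intro y hy
            rw [Set.mem_singleton_iff] at hy
            subst hy
            exact ⟨fun h => hab (congrArg Subtype.val h).symm,
              fun h => hbw (congrArg Subtype.val h)⟩
          · rintro x hx y hyp hyq
            have hy1a : y.1 ≠ a := fun h => hyp (Subtype.ext h)
            have hy1w : y.1 ≠ w := fun h => hyq (Subtype.ext h)
            have hy1B : y.1 ∈ B := by
              rcases hmem y.1 with hyA | hyB
              · rw [hAeq] at hyA
                rcases hyA with h | h
                · exact absurd h y.2
                · exact absurd h hy1a
              · exact hyB
            rcases hx with rfl | hx
            · rw [hHG _ y (fun h => haw h.1) (fun h => hy1w h.2)]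
              constructor
              · intro h; exact absurd h (hnadj_a y.1 hy1B)
              · rintro ⟨h, -⟩
                exact absurd (congrArg Subtype.val (Set.mem_singleton_iff.mp h)) haw
            · rw [Set.mem_singleton_iff] at hx
              subst hx
              rw [hHG _ y (fun h => hy1a h.2) (fun h => haw h.1.symm)]
              constructor
              · intro h
                rcases (hNw y.1).mp h with h' | h'
                · exact absurd h' y.2
                · exact ⟨rfl, Set.mem_singleton_iff.mpr (Subtype.ext h')⟩
              · rintro ⟨-, h⟩
                have : y.1 = b := congrArg Subtype.val (Set.mem_singleton_iff.mp h)
                rw [this]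
                exact hGwb
      · -- Case IV : w ∈ B, a ∈ B
        have hvw' : v ∈ A' ∧ w ∈ B' := (hAdjAB v hvA w hwB).mp hadj
        have haB' : a ∈ B' := ((hAdjAB v hvA a haB).mp hGva).2
        have hB'sub : ∀ y ∈ B', y = w ∨ y = a := by
          intro y hy
          exact (hNv y).mp ((hAdjAB v hvA y (hB' hy)).mpr ⟨hvw'.1, hy⟩)
        by_cases hA3 : 3 ≤ A.ncard
        · refine subtype_split v H A B hU hD hvA hA3 hB2 (A' \ {v}) B'
            (Set.diff_subset.trans hA') hB' ?_ hcon
          intro x hx hxv y hy hyv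
          have hxw : x ≠ w := fun h => hnotB x hx (h ▸ hwB)
          have hxa : x ≠ a := fun h => hnotB x hx (h ▸ haB)
          rw [hHG ⟨x, hxv⟩ ⟨y, hyv⟩ (fun h => hxw h.1) (fun h => hxa h.1),
            hAdjAB x hx y hy]
          simp only [Set.mem_diff, Set.mem_singleton_iff]
          tauto
        · -- A = {v, u}
          have hA2' : A.ncard = 2 := le_antisymm (by omega) hA2
          obtain ⟨u, huv, hAeq⟩ := eq_pair_of_ncard_eq_two hA2' hvA
          have huA : u ∈ A := by rw [hAeq]; exact Set.mem_insert_of_mem _ rfl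
          have huw : u ≠ w := fun h => hnotB u huA (h ▸ hwB)
          have hua : u ≠ a := fun h => hnotB u huA (h ▸ haB)
          by_cases huA' : u ∈ A'
          · -- u = b, N_G(b) = {w, a}
            have hGuw : G.Adj u w := (hAdjAB u huA w hwB).mpr ⟨huA', hvw'.2⟩
            have hub : u = b := by
              rcases (hNw u).mp hGuw.symm with h | h
              · exact absurd h huv
              · exact h
            have hGua : G.Adj u a := (hAdjAB u huA a haB).mpr ⟨huA', haB'⟩
            refine absurd hcon (not_prime_of_pair H hcard4 ⟨w, hwv⟩ ⟨u, huv⟩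
              (fun h => huw (congrArg Subtype.val h).symm)
              {⟨w, hwv⟩, ⟨u, huv⟩} {⟨a, hav⟩} subset_rfl ?_ ?_)
            · intro y hy
              rw [Set.mem_singleton_iff] at hy
              subst hy
              exact ⟨fun h => haw (congrArg Subtype.val h),
                fun h => hua (congrArg Subtype.val h).symm⟩
            · rintro x hx y hyp hyq
              have hy1w : y.1 ≠ w := fun h => hyp (Subtype.ext h)
              have hy1u : y.1 ≠ u := fun h => hyq (Subtype.ext h)
              have hy1B : y.1 ∈ B := by
                rcases hmem y.1 with hyA | hyB
                · rw [hAeq] at hyA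
                  rcases hyA with h | h
                  · exact absurd h y.2
                  · exact absurd h hy1u
                · exact hyB
              rcases hx with rfl | hx
              · by_cases hy1a : y.1 = a
                · have hya : y = ⟨a, hav⟩ := Subtype.ext hy1a
                  subst hya
                  constructor
                  · intro _; exact ⟨Set.mem_insert _ _, rfl⟩
                  · intro _; exact hHwa
                · rw [hHG _ y (fun h => hy1a h.2) (fun h => haw h.1.symm)]
                  constructor
                  · intro h
                    rcases (hNw y.1).mp h with h' | h'
                    · exact absurd h' y.2
                    · exact absurd h' (by
                        intro hyb
                        exact hy1u (hyb ▸ hub.symm ▸ rfl))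
                  · rintro ⟨-, h⟩
                    exact absurd (congrArg Subtype.val (Set.mem_singleton_iff.mp h)) hy1a
              · rw [Set.mem_singleton_iff] at hx
                subst hx
                rw [hHG _ y (fun h => huw h.1) (fun h => hua h.1)]
                constructor
                · intro h
                  have hy1B' : y.1 ∈ B' := ((hAdjAB u huA y.1 hy1B).mp h).2
                  rcases hB'sub y.1 hy1B' with h' | h'
                  · exact absurd h' hy1w
                  · exact ⟨Set.mem_insert_of_mem _ rfl,
                      Set.mem_singleton_iff.mpr (Subtype.ext h')⟩
                · rintro ⟨-, h⟩
                  have : y.1 = a := congrArg Subtype.val (Set.mem_singleton_iff.mp h)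
                  rw [show y = (⟨a, hav⟩ : {x : V // x ≠ v}) from Subtype.ext this]
                  exact hGua
          · -- u isolated in H
            apply hiso_split ⟨u, huv⟩
            intro y hy
            have hGuy : G.Adj u y.1 :=
              (hHG ⟨u, huv⟩ y (fun h => huw h.1) (fun h => hua h.1)).mp hy
            rcases hmem y.1 with hyA | hyB
            · rw [hAeq] at hyA
              rcases hyA with h | h
              · exact y.2 h
              · exact hGuy.ne (h.symm)
            · exact huA' ((hAdjAB u huA y.1 hyB).mp hGuy).1
    have hvmem : v ∈ A ∪ B := hsplit.1 ▸ Set.mem_univ v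
    rcases hvmem with hvA | hvB
    · exact main A B hsplit hvA
    · exact main B A (isSplit_symm hsplit) hvB
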